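/- arXiv:1305.5880 — 2 statements merged into one kernel-verified Lean document; each statement's English description precedes it below -/
import Mathlib

section
/- Every weighted quasi-metric space (X,q,w) arises as the graph construction over a metric space with a 1-Lipschitz function: taking ρ to be the symmetrization of q and f := w/2, f is 1-Lipschitz with respect to ρ and q(x,y) = ρ(x,y) + f(y) - f(x) for all x,y ∈ X. -/
/-- Every weighted quasi-metric space `(X,q,w)` arises from the graph
construction: with `ρ` the symmetrization of `q` and `f := w/2`, `f` is
1-Lipschitz for `ρ` and `q(x,y) = ρ(x,y) + f(y) - f(x)`. -/
theorem weighted_quasi_metric_is_graph {X : Type*} (q : X → X → ℝ) (w : X → ℝ)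
    (hq_nonneg : ∀ x y, 0 ≤ q x y)
    (hq_refl : ∀ x, q x x = 0)
    (hq_pos : ∀ x y, x ≠ y → 0 < q x y)
    (hq_tri : ∀ x y z, q x y ≤ q x z + q z y)
    (hw_nonneg : ∀ x, 0 ≤ w x)
    (hw : ∀ x y, q x y + w x = q y x + w y) :
    (∀ x y, |w x / 2 - w y / 2| ≤ (q x y + q y x) / 2) ∧
    (∀ x y, q x y = (q x y + q y x) / 2 + (w y / 2 - w x / 2)) := by
  constructor
  · intro x y
    have h := hw x y
    have h1 := hq_nonneg x y
    have h2 := hq_nonneg y x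
    rw [abs_le]
    constructor <;> linarith
  · intro x y
    have h := hw x y
    linarith
end

section
/- Let (M,q) be a quasi-metric space, X := M × [0,∞) with δ((x,ξ),(y,η)) := max{q(x,y),q(y,x)} + |ξ-η|, and E(z) := {(y,η) ∈ X : q(y,z) ≤ η}. Then the map E is an isometry onto its image with respect to the forward Hausdorff distance: for all x,y ∈ M, q(x,y) = sup_{a ∈ E(x)} inf_{b ∈ E(y)} δ(a,b). In particular E is injective. -/
/-- The map `E(z) := {(y,η) : q(y,z) ≤ η}` is an isometry of `(M,q)` onto its
image with respect to the forward Hausdorff distance: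
`q(x,y) = sup_{a ∈ E(x)} inf_{b ∈ E(y)} δ(a,b)`; in particular `E` is injective. -/
theorem E_forward_Hausdorff_isometry {M : Type*} (q : M → M → ℝ)
    (hq_nonneg : ∀ x y, 0 ≤ q x y)
    (hq_refl : ∀ x, q x x = 0)
    (hq_pos : ∀ x y, x ≠ y → 0 < q x y)
    (hq_tri : ∀ x y z, q x y ≤ q x z + q z y) :
    let X := M × {ξ : ℝ // 0 ≤ ξ}
    let δ : X → X → ℝ := fun u v => max (q u.1 v.1) (q v.1 u.1) + |u.2.1 - v.2.1|
    let E : M → Set X := fun z => {p | q p.1 z ≤ p.2.1}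
    (∀ x y, q x y = ⨆ a : E x, ⨅ b : E y, δ a b) ∧ Function.Injective E := by
  intro X δ E
  have hEmem : ∀ z : M, ((z, ⟨0, le_refl 0⟩) : X) ∈ E z := by
    intro z
    simp only [E, Set.mem_setOf_eq, hq_refl, le_refl]
    exact le_of_eq (hq_refl z)
  constructor
  · intro x y
    haveI hx : Nonempty (E x) := ⟨⟨_, hEmem x⟩⟩
    haveI hy : Nonempty (E y) := ⟨⟨_, hEmem y⟩⟩
    have hδnn : ∀ u v : X, 0 ≤ δ u v := fun u v =>
      add_nonneg (le_trans (hq_nonneg _ _) (le_max_left _ _)) (abs_nonneg _)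
    have hbdd : ∀ a : E x, BddBelow (Set.range fun b : E y => δ a b) :=
      fun a => ⟨0, by rintro r ⟨b, rfl⟩; exact hδnn _ _⟩
    have hinf_le : ∀ a : E x, (⨅ b : E y, δ (a : X) b) ≤ q x y := by
      rintro ⟨⟨z, ζ⟩, ha⟩
      have hζ : q z x ≤ ζ.1 := ha
      have hη0 : (0 : ℝ) ≤ max ζ.1 (q z y) := le_trans ζ.2 (le_max_left _ _)
      have hb : ((z, ⟨max ζ.1 (q z y), hη0⟩) : X) ∈ E y := by
        simp only [E, Set.mem_setOf_eq]; exact (le_max_right _ _ : q z y ≤ max ζ.1 (q z y))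
      refine le_trans (ciInf_le (hbdd _) ⟨_, hb⟩) ?_
      have h1 : max ζ.1 (q z y) ≤ ζ.1 + q x y := by
        refine max_le (le_add_of_nonneg_right (hq_nonneg _ _)) ?_
        calc q z y ≤ q z x + q x y := hq_tri z y x
          _ ≤ ζ.1 + q x y := add_le_add_left hζ _
      have habs : |ζ.1 - max ζ.1 (q z y)| ≤ q x y := by
        rw [abs_sub_comm, abs_of_nonneg (sub_nonneg.mpr (le_max_left _ _))]
        linarith
      simp only [δ, hq_refl, max_self, zero_add]
      exact habs
    refine le_antisymm ?_ (ciSup_le hinf_le)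
    refine le_trans ?_ (le_ciSup ⟨q x y, by rintro r ⟨a, rfl⟩; exact hinf_le a⟩
      (⟨_, hEmem x⟩ : E x))
    refine le_ciInf ?_
    rintro ⟨⟨z, η⟩, hb⟩
    have hzy : q z y ≤ η.1 := hb
    have : q x y ≤ q x z + η.1 := le_trans (hq_tri x y z) (add_le_add_right hzy _)
    have habs : |(0 : ℝ) - η.1| = η.1 := by
      rw [zero_sub, abs_neg, abs_of_nonneg η.2]
    simp only [δ, habs]
    calc q x y ≤ q x z + η.1 := this
      _ ≤ max (q x z) (q z x) + η.1 := add_le_add_left (le_max_left _ _) _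
  · intro x y h
    by_contra hne
    have := hEmem x
    rw [h] at this
    exact absurd this (not_le.mpr (hq_pos x y hne))
end
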